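/- Let P and Q be probability measures such that D_∞(P‖Q) ≤ ε and D_∞(Q‖P) ≤ ε, where D_∞(P‖Q) = ess sup log(dP/dQ). Then for every α > 1, the Rényi divergence satisfies D_α(P‖Q) ≤ ½·α·ε². -/

import Mathlib

open MeasureTheory

/-- `e^t - e^{-t} ≤ t (e^t + e^{-t})` for `t ≥ 0` (i.e. `tanh t ≤ t`). -/
lemma exp_sub_le_mul_add {t : ℝ} (ht : 0 ≤ t) :
    Real.exp t - Real.exp (-t) ≤ t * (Real.exp t + Real.exp (-t)) := by
  set F : ℝ → ℝ := fun s => s * (Real.exp s + Real.exp (-s)) - (Real.exp s - Real.exp (-s))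
    with hF
  have hder : ∀ s : ℝ, HasDerivAt F (s * (Real.exp s - Real.exp (-s))) s := by
    intro s
    have h1 : HasDerivAt (fun u : ℝ => Real.exp u) (Real.exp s) s := Real.hasDerivAt_exp s
    have h2 : HasDerivAt (fun u : ℝ => Real.exp (-u)) (Real.exp (-s) * (-1)) s :=
      (hasDerivAt_neg s).exp
    have h3 := ((hasDerivAt_id s).mul (h1.add h2)).sub (h1.sub h2)
    simp only [id_eq] at h3
    exact h3.congr_deriv (by simp only [Pi.add_apply]; ring)
  have hmono : Monotone F :=
    monotone_of_hasDerivAt_nonneg hder (by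
      intro s
      show (0:ℝ) ≤ s * (Real.exp s - Real.exp (-s))
      rcases le_total 0 s with hs | hs
      · exact mul_nonneg hs (sub_nonneg.2 (Real.exp_le_exp.2 (by linarith)))
      · have h1 : Real.exp s - Real.exp (-s) ≤ 0 :=
          sub_nonpos.2 (Real.exp_le_exp.2 (by linarith))
        nlinarith)
  have h0 : F 0 = 0 := by simp [hF]
  have := hmono ht
  rw [h0] at this
  simp only [hF] at this
  linarith

/-- Key analytic inequality (Hoeffding-type):
`e^{αε} + e^{(1-α)ε} ≤ (1 + e^ε) e^{α(α-1)ε²/2}` for `ε ≥ 0`, `α ≥ 1`. -/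
lemma key_ineq {ε α : ℝ} (hε : 0 ≤ ε) (hα : 1 ≤ α) :
    Real.exp (α * ε) + Real.exp ((1 - α) * ε)
      ≤ (1 + Real.exp ε) * Real.exp (α * (α - 1) * ε ^ 2 / 2) := by
  set G : ℝ → ℝ := fun a =>
    a * (a - 1) * ε ^ 2 / 2 + Real.log (1 + Real.exp ε)
      - Real.log (Real.exp (a * ε) + Real.exp ((1 - a) * ε)) with hG
  have hS : ∀ a : ℝ, 0 < Real.exp (a * ε) + Real.exp ((1 - a) * ε) := fun a => by positivity
  have hder : ∀ a : ℝ, HasDerivAt G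
      ((2 * a - 1) * ε ^ 2 / 2 -
        (Real.exp (a * ε) * ε - Real.exp ((1 - a) * ε) * ε) /
          (Real.exp (a * ε) + Real.exp ((1 - a) * ε))) a := by
    intro a
    have h1 : HasDerivAt (fun u : ℝ => Real.exp (u * ε)) (Real.exp (a * ε) * ε) a :=
      (hasDerivAt_mul_const ε).exp
    have h2 : HasDerivAt (fun u : ℝ => Real.exp ((1 - u) * ε))
        (Real.exp ((1 - a) * ε) * (-ε)) a := by
      have : HasDerivAt (fun u : ℝ => (1 - u) * ε) (-ε) a := by
        simpa using ((hasDerivAt_id a).const_sub 1).mul_const ε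
      exact this.exp
    have h3 : HasDerivAt (fun u : ℝ =>
        Real.log (Real.exp (u * ε) + Real.exp ((1 - u) * ε)))
        ((Real.exp (a * ε) * ε + Real.exp ((1 - a) * ε) * (-ε)) /
          (Real.exp (a * ε) + Real.exp ((1 - a) * ε))) a :=
      (h1.add h2).log (ne_of_gt (hS a))
    have h4 : HasDerivAt (fun u : ℝ => u * (u - 1) * ε ^ 2 / 2 + Real.log (1 + Real.exp ε))
        ((1 * (a - 1) + a * 1) * (ε ^ 2 / 2)) a := by
      have : HasDerivAt (fun u : ℝ => u * (u - 1)) (1 * (a - 1) + a * 1) a :=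
        (hasDerivAt_id a).mul ((hasDerivAt_id a).sub_const 1)
      simpa [mul_div_assoc] using (this.mul_const (ε ^ 2 / 2)).add_const (Real.log (1 + Real.exp ε))
    have h5 := h4.sub h3
    exact h5.congr_deriv (by ring)
  have hmono : MonotoneOn G (Set.Ici 1) := by
    apply monotoneOn_of_deriv_nonneg (convex_Ici 1)
      (fun a _ => ((hder a).differentiableAt.continuousAt).continuousWithinAt)
      (fun a _ => ((hder a).differentiableAt).differentiableWithinAt)
    intro a ha
    rw [interior_Ici] at ha
    have ha1 : (1 : ℝ) < a := ha
    rw [(hder a).deriv]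
    rw [sub_nonneg, div_le_iff₀ (hS a)]
    -- reduce to tanh inequality with t = (2a-1)ε/2
    set t := (2 * a - 1) * ε / 2 with htdef
    have ht : 0 ≤ t := by
      apply div_nonneg _ (by norm_num)
      apply mul_nonneg (by linarith) hε
    have e1 : Real.exp (a * ε) = Real.exp (ε / 2) * Real.exp t := by
      rw [← Real.exp_add]; congr 1; rw [htdef]; ring
    have e2 : Real.exp ((1 - a) * ε) = Real.exp (ε / 2) * Real.exp (-t) := by
      rw [← Real.exp_add]; congr 1; rw [htdef]; ring
    have hkey := exp_sub_le_mul_add ht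
    have hm : 0 < Real.exp (ε / 2) := Real.exp_pos _
    have h6 : (2 * a - 1) * ε ^ 2 / 2 = t * ε := by rw [htdef]; ring
    rw [e1, e2, h6]
    have := mul_le_mul_of_nonneg_left hkey (le_of_lt (mul_pos hm (lt_of_lt_of_le Real.zero_lt_one (le_of_eq rfl) ) )) 
    nlinarith [mul_le_mul_of_nonneg_left hkey (mul_nonneg hm.le hε), Real.exp_pos t, Real.exp_pos (-t)]
  have h1mem : (1 : ℝ) ∈ Set.Ici (1 : ℝ) := Set.mem_Ici.2 le_rfl
  have hαmem : α ∈ Set.Ici (1 : ℝ) := Set.mem_Ici.2 hα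
  have hG1 : G 1 = 0 := by
    simp only [hG]
    norm_num
    rw [add_comm]
    exact sub_self _
  have hGα := hmono h1mem hαmem hα
  rw [hG1] at hGα
  -- unfold: 0 ≤ α(α-1)ε²/2 + log(1+e^ε) - log(S)
  have hlog : Real.log (Real.exp (α * ε) + Real.exp ((1 - α) * ε))
      ≤ Real.log ((1 + Real.exp ε) * Real.exp (α * (α - 1) * ε ^ 2 / 2)) := by
    rw [Real.log_mul (by positivity) (by positivity), Real.log_exp]
    simp only [hG] at hGα
    linarith
  have := (Real.log_le_log_iff (hS α) (by positivity)).1 hlog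
  exact this

/-- Bun–Steinke Proposition 3.3: if the max divergences in both directions are at
most ε, then the Rényi divergence of order α satisfies D_α(P‖Q) ≤ ½αε². Here P and
Q are given by densities p and q with respect to a base measure ν, the bound
D_∞(P‖Q) ≤ ε is expressed as p ≤ e^ε q a.e., and
D_α(P‖Q) = (1/(α-1))·log ∫ p^α q^{1-α} dν. -/
theorem renyi_le_of_max_divergence {Ω : Type*} [MeasurableSpace Ω]
    (ν : Measure Ω) (p q : Ω → ℝ) (hp : Measurable p) (hq : Measurable q)
    (hp0 : ∀ x, 0 ≤ p x) (hq0 : ∀ x, 0 ≤ q x)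
    (hp1 : ∫ x, p x ∂ν = 1) (hq1 : ∫ x, q x ∂ν = 1)
    (ε : ℝ) (hε : 0 ≤ ε)
    (hPQ : ∀ᵐ x ∂ν, p x ≤ Real.exp ε * q x)
    (hQP : ∀ᵐ x ∂ν, q x ≤ Real.exp ε * p x)
    (α : ℝ) (hα : 1 < α) :
    (1 / (α - 1)) * Real.log (∫ x, p x ^ α * q x ^ (1 - α) ∂ν)
      ≤ (1 / 2) * α * ε ^ 2 := by
  have hα0 : α ≠ 0 := by linarith
  have hα1 : (1 : ℝ) - α ≠ 0 := by intro h; linarith [sub_eq_zero.1 h]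
  have hαpos : 0 < α - 1 := by linarith
  have hRHS : 0 ≤ (1 / 2) * α * ε ^ 2 := by positivity
  rcases eq_or_lt_of_le hε with hε0 | hεpos
  · -- ε = 0 : p = q a.e., integral is 1
    have hpq : p =ᵐ[ν] q := by
      filter_upwards [hPQ, hQP] with x h1 h2
      rw [← hε0, Real.exp_zero, one_mul] at h1 h2
      linarith
    have hcongr : (fun x => p x ^ α * q x ^ (1 - α)) =ᵐ[ν] p := by
      filter_upwards [hpq] with x hx
      rw [← hx]
      rcases eq_or_lt_of_le (hp0 x) with h | h
      · rw [← h, Real.zero_rpow hα0, Real.zero_rpow hα1, mul_zero]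
      · rw [← Real.rpow_add h]
        norm_num
    rw [integral_congr_ae hcongr, hp1, Real.log_one, mul_zero]
    exact hRHS
  · -- ε > 0
    set X := Real.exp ε with hX
    set W := Real.exp (-ε) with hW
    set Z := Real.exp (α * ε) with hZ
    set V := Real.exp (-(α * ε)) with hV
    have hX1 : 1 < X := by rw [hX, ← Real.exp_zero]; exact Real.exp_lt_exp.2 hεpos
    have hX0 : 0 < X := lt_trans one_pos hX1
    have hW0 : 0 < W := Real.exp_pos _
    have hZ0 : 0 < Z := Real.exp_pos _
    have hV0 : 0 < V := Real.exp_pos _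
    have hXW : X * W = 1 := by rw [hX, hW, ← Real.exp_add]; simp
    have hZV : Z * V = 1 := by rw [hZ, hV, ← Real.exp_add]; simp
    have hWX : W < X := by
      rw [hW, hX]; exact Real.exp_lt_exp.2 (by linarith)
    set D := X - W with hD
    have hD0 : 0 < D := by rw [hD]; linarith
    set A := (Z - V) / D with hA
    set C := (X * V - Z * W) / D with hC
    -- pointwise bound
    have hae : ∀ᵐ x ∂ν, p x ^ α * q x ^ (1 - α) ≤ A * p x + C * q x := by
      filter_upwards [hPQ, hQP] with x h1 h2
      rcases eq_or_lt_of_le (hq0 x) with hq' | hq'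
      · have hp' : p x = 0 := le_antisymm (by rw [← hq'] at h1; simpa using h1) (hp0 x)
        rw [hp', ← hq', Real.zero_rpow hα0, Real.zero_rpow hα1]
        simp
      · set r := p x / q x with hr
        have hr0 : 0 ≤ r := div_nonneg (hp0 x) (hq0 x)
        have hrq : p x = r * q x := by rw [hr]; field_simp
        have hr1 : r ≤ X := by rw [hr, div_le_iff₀ hq']; linarith
        have hr2 : W ≤ r := by
          rw [hr, le_div_iff₀ hq']
          have := mul_le_mul_of_nonneg_left h2 hW0.le
          rw [← mul_assoc, mul_comm W X, hXW, one_mul] at this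
          linarith
        -- convexity of x ↦ x^α on [0, ∞)
        set a := (X - r) / D with ha'
        set b := (r - W) / D with hb'
        have ha : 0 ≤ a := div_nonneg (by linarith) hD0.le
        have hb : 0 ≤ b := div_nonneg (by linarith) hD0.le
        have hab : a + b = 1 := by
          rw [ha', hb', ← add_div,
            show X - r + (r - W) = D from by rw [hD]; ring, div_self hD0.ne']
        have hcx := (convexOn_rpow hα.le).2 (Set.mem_Ici.2 hW0.le) (Set.mem_Ici.2 hX0.le)
          ha hb hab
        have hcomb : a • W + b • X = r := by
          simp only [smul_eq_mul, ha', hb']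
          rw [div_mul_eq_mul_div, div_mul_eq_mul_div, ← add_div,
            show (X - r) * W + (r - W) * X = r * D from by rw [hD]; ring,
            mul_div_assoc, div_self hD0.ne', mul_one]
        rw [hcomb] at hcx
        simp only [smul_eq_mul] at hcx
        have hWa : W ^ α = V := by
          rw [hW, hV, ← Real.exp_mul]; congr 1; ring
        have hXb : X ^ α = Z := by
          rw [hX, hZ, ← Real.exp_mul, mul_comm]
        rw [hWa, hXb] at hcx
        have hLHS : p x ^ α * q x ^ (1 - α) = r ^ α * q x := by
          rw [hrq, Real.mul_rpow hr0 hq'.le, mul_assoc, ← Real.rpow_add hq']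
          norm_num
        rw [hLHS]
        have hstep := mul_le_mul_of_nonneg_right hcx hq'.le
        have hEq : (a * V + b * Z) * q x = A * p x + C * q x := by
          rw [hrq, ha', hb', hA, hC]
          field_simp
          ring
        rw [hEq] at hstep
        exact hstep
    -- integrability
    have hIp : Integrable p ν := by
      by_contra h; rw [integral_undef h] at hp1; norm_num at hp1
    have hIq : Integrable q ν := by
      by_contra h; rw [integral_undef h] at hq1; norm_num at hq1
    have hg : Integrable (fun x => A * p x + C * q x) ν :=
      (hIp.const_mul A).add (hIq.const_mul C)
    have hnn : ∀ x, 0 ≤ p x ^ α * q x ^ (1 - α) := fun x =>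
      mul_nonneg (Real.rpow_nonneg (hp0 x) α) (Real.rpow_nonneg (hq0 x) _)
    have hmeas : AEStronglyMeasurable (fun x => p x ^ α * q x ^ (1 - α)) ν :=
      ((hp.pow measurable_const).mul (hq.pow measurable_const)).aestronglyMeasurable
    have hInt : Integrable (fun x => p x ^ α * q x ^ (1 - α)) ν := by
      apply hg.mono' hmeas
      filter_upwards [hae] with x hx
      rw [Real.norm_eq_abs, abs_of_nonneg (hnn x)]
      exact hx
    have hle : ∫ x, p x ^ α * q x ^ (1 - α) ∂ν ≤ A + C := by
      have h := integral_mono_ae hInt hg hae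
      rwa [integral_add (hIp.const_mul A) (hIq.const_mul C), integral_const_mul,
        integral_const_mul, hp1, hq1, mul_one, mul_one] at h
    have hAC : A + C ≤ Real.exp (α * (α - 1) * ε ^ 2 / 2) := by
      have hkey := key_ineq hε hα.le
      have hZe : Real.exp ((1 - α) * ε) = X * V := by
        rw [hX, hV, ← Real.exp_add]; congr 1; ring
      rw [hZe, ← hX, ← hZ] at hkey
      -- hkey : Z + X * V ≤ (1 + X) * exp(...)
      have heq : A + C = (Z + X * V) / (1 + X) := by
        rw [hA, hC, ← add_div, div_eq_div_iff hD0.ne' (by positivity : (0:ℝ) < 1 + X).ne']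
        rw [hD]
        linear_combination (V - Z) * hXW
      rw [heq, div_le_iff₀ (by positivity : (0:ℝ) < 1 + X)]
      linarith [hkey]
    have h0 : 0 ≤ ∫ x, p x ^ α * q x ^ (1 - α) ∂ν := integral_nonneg hnn
    rcases eq_or_lt_of_le h0 with h | h
    · rw [← h, Real.log_zero, mul_zero]
      exact hRHS
    · have hlog : Real.log (∫ x, p x ^ α * q x ^ (1 - α) ∂ν) ≤ α * (α - 1) * ε ^ 2 / 2 := by
        have h2 : ∫ x, p x ^ α * q x ^ (1 - α) ∂ν ≤ Real.exp (α * (α - 1) * ε ^ 2 / 2) :=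
          le_trans hle hAC
        calc Real.log (∫ x, p x ^ α * q x ^ (1 - α) ∂ν)
            ≤ Real.log (Real.exp (α * (α - 1) * ε ^ 2 / 2)) := Real.log_le_log h h2
          _ = α * (α - 1) * ε ^ 2 / 2 := Real.log_exp _
      calc (1 / (α - 1)) * Real.log (∫ x, p x ^ α * q x ^ (1 - α) ∂ν)
          ≤ (1 / (α - 1)) * (α * (α - 1) * ε ^ 2 / 2) :=
            mul_le_mul_of_nonneg_left hlog (by positivity)
        _ = (1 / 2) * α * ε ^ 2 := by field_simp
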